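/- Let G be a graph with an r-edge-colouring c such that τ(H(G,c)) ≥ s. Then there exists W ⊆ V(G) with |W| ≤ binomial(r−1+s, r) such that τ(H(G,W,c)) ≥ s. -/

import Mathlib

/-- The colour-`i` subgraph of `G` under the edge-colouring `c`. -/
def colourSub {V : Type*} {r : ℕ} (G : SimpleGraph V) (c : Sym2 V → Fin r)
    (i : Fin r) : SimpleGraph V where
  Adj u v := G.Adj u v ∧ c s(u, v) = i
  symm := by
    constructor
    intro u v h
    exact ⟨h.1.symm, by rw [Sym2.eq_swap]; exact h.2⟩
  loopless := by constructor; intro u h; exact G.irrefl h.1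

/-- The edge `ed(u)` of the auxiliary hypergraph `H(G,c)`. -/
def edMap {V : Type*} {r : ℕ} (G : SimpleGraph V) (c : Sym2 V → Fin r) (u : V) :
    (i : Fin r) → (colourSub G c i).ConnectedComponent :=
  fun i => (colourSub G c i).connectedComponentMk u

open Classical in
/-- The edge `ed(u)` of the auxiliary hypergraph `H(G,W,c)`: colour-`i`
components disjoint from `W` are collapsed to the vertex `v_i^*` (`none`). -/
noncomputable def edMapW {V : Type*} {r : ℕ} (G : SimpleGraph V)
    (c : Sym2 V → Fin r) (W : Set V) (u : V) :
    (i : Fin r) → Option ((colourSub G c i).ConnectedComponent) :=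
  fun i =>
    if ∃ w ∈ W, (colourSub G c i).connectedComponentMk w
        = (colourSub G c i).connectedComponentMk u
    then some ((colourSub G c i).connectedComponentMk u) else none

set_option linter.unusedSectionVars false

open Finset

section BollobasOrd

variable {α : Type*} [Fintype α] [DecidableEq α]

/-- The list obtained by listing the `σ`-positions of `A` in increasing order,
followed by the `σ`-positions of `B` in increasing order. -/
def LLb (A B : Finset α) (σ : α ≃ Fin (Fintype.card α)) : List (Fin (Fintype.card α)) :=
  ((A.image σ).sort (· ≤ ·)) ++ ((B.image σ).sort (· ≤ ·))

lemma mem_LLb {A B : Finset α} {σ : α ≃ Fin (Fintype.card α)} {p : Fin (Fintype.card α)} :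
    p ∈ LLb A B σ ↔ p ∈ (A ∪ B).image σ := by
  simp [LLb, Finset.image_union, Finset.mem_union]

lemma length_LLb (A B : Finset α) (σ : α ≃ Fin (Fintype.card α)) :
    (LLb A B σ).length = A.card + B.card := by
  simp [LLb, Finset.card_image_of_injective _ σ.injective]

lemma card_image_union (A B : Finset α) (hd : Disjoint A B) (σ : α ≃ Fin (Fintype.card α)) :
    ((A ∪ B).image σ).card = (LLb A B σ).length := by
  rw [length_LLb, Finset.card_image_of_injective _ σ.injective,
    Finset.card_union_of_disjoint hd]

lemma nodup_LLb (A B : Finset α) (hd : Disjoint A B) (σ : α ≃ Fin (Fintype.card α)) :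
    (LLb A B σ).Nodup := by
  refine List.Nodup.append (Finset.sort_nodup _ _) (Finset.sort_nodup _ _) ?_
  intro p hp₁ hp₂
  rw [Finset.mem_sort] at hp₁ hp₂
  exact Finset.disjoint_left.mp ((Finset.disjoint_image σ.injective).mpr hd) hp₁ hp₂

lemma indexOf_LLb_lt {A B : Finset α} {σ : α ≃ Fin (Fintype.card α)} {x : α}
    (hx : x ∈ A ∪ B) : (LLb A B σ).idxOf (σ x) < (LLb A B σ).length :=
  List.idxOf_lt_length_iff.mpr (mem_LLb.mpr (Finset.mem_image_of_mem σ hx))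

/-- The "sorted" version of the ordering `σ`: the positions occupied by `A ∪ B`
are reassigned so that `A` comes entirely before `B`. -/
noncomputable def tauFun (A B : Finset α) (hd : Disjoint A B) (σ : α ≃ Fin (Fintype.card α))
    (x : α) : Fin (Fintype.card α) :=
  if hx : x ∈ A ∪ B then
    ((A ∪ B).image σ).orderEmbOfFin (card_image_union A B hd σ)
      ⟨(LLb A B σ).idxOf (σ x), indexOf_LLb_lt hx⟩
  else σ x

lemma tauFun_mem {A B : Finset α} {hd : Disjoint A B} {σ : α ≃ Fin (Fintype.card α)} {x : α}
    (hx : x ∈ A ∪ B) : tauFun A B hd σ x ∈ (A ∪ B).image σ := by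
  rw [tauFun, dif_pos hx]
  exact Finset.orderEmbOfFin_mem _ _ _

lemma tauFun_not_mem {A B : Finset α} {hd : Disjoint A B} {σ : α ≃ Fin (Fintype.card α)} {x : α}
    (hx : x ∉ A ∪ B) : tauFun A B hd σ x = σ x := dif_neg hx

lemma tauFun_inj (A B : Finset α) (hd : Disjoint A B) (σ : α ≃ Fin (Fintype.card α)) :
    Function.Injective (tauFun A B hd σ) := by
  intro x y hxy
  by_cases hx : x ∈ A ∪ B <;> by_cases hy : y ∈ A ∪ B
  · simp only [tauFun] at hxy
    rw [dif_pos hx, dif_pos hy] at hxy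
    have h1 := (((A ∪ B).image σ).orderEmbOfFin (card_image_union A B hd σ)).injective hxy
    have h2 : (LLb A B σ).idxOf (σ x) = (LLb A B σ).idxOf (σ y) := congrArg Fin.val h1
    have h3 : σ x = σ y :=
      (List.idxOf_inj (mem_LLb.mpr (Finset.mem_image_of_mem σ hx))).mp h2
    exact σ.injective h3
  · exfalso
    have h1 := tauFun_mem (hd := hd) (σ := σ) hx
    rw [hxy, tauFun_not_mem hy] at h1
    obtain ⟨z, hz, hz'⟩ := Finset.mem_image.mp h1
    exact hy (σ.injective hz' ▸ hz)
  · exfalso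
    have h1 := tauFun_mem (hd := hd) (σ := σ) hy
    rw [← hxy, tauFun_not_mem hx] at h1
    obtain ⟨z, hz, hz'⟩ := Finset.mem_image.mp h1
    exact hx (σ.injective hz' ▸ hz)
  · rw [tauFun_not_mem hx, tauFun_not_mem hy] at hxy
    exact σ.injective hxy

/-- `tauOrd` as an equivalence. -/
noncomputable def tauOrd (A B : Finset α) (hd : Disjoint A B) (σ : α ≃ Fin (Fintype.card α)) :
    α ≃ Fin (Fintype.card α) :=
  Equiv.ofBijective (tauFun A B hd σ)
    ((Fintype.bijective_iff_injective_and_card (tauFun A B hd σ)).mpr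
      ⟨tauFun_inj A B hd σ, by simp⟩)

lemma tauOrd_apply (A B : Finset α) (hd : Disjoint A B) (σ : α ≃ Fin (Fintype.card α)) (x : α) :
    tauOrd A B hd σ x = tauFun A B hd σ x := rfl

lemma image_tauOrd (A B : Finset α) (hd : Disjoint A B) (σ : α ≃ Fin (Fintype.card α)) :
    (A ∪ B).image (tauOrd A B hd σ) = (A ∪ B).image σ := by
  apply Finset.eq_of_subset_of_card_le
  · intro p hp
    obtain ⟨x, hx, rfl⟩ := Finset.mem_image.mp hp
    exact tauFun_mem (hd := hd) (σ := σ) hx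
  · rw [Finset.card_image_of_injective _ σ.injective,
      Finset.card_image_of_injective _ (tauOrd A B hd σ).injective]

lemma tauFun_lt {A B : Finset α} (hd : Disjoint A B) (σ : α ≃ Fin (Fintype.card α)) {x y : α}
    (hx : x ∈ A) (hy : y ∈ B) : tauFun A B hd σ x < tauFun A B hd σ y := by
  have hx' : x ∈ A ∪ B := Finset.mem_union_left _ hx
  have hy' : y ∈ A ∪ B := Finset.mem_union_right _ hy
  rw [tauFun, dif_pos hx', tauFun, dif_pos hy']
  rw [OrderEmbedding.lt_iff_lt]
  have h1 : (LLb A B σ).idxOf (σ x) < ((A.image σ).sort (· ≤ ·)).length := by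
    rw [LLb, List.idxOf_append_of_mem (by rw [Finset.mem_sort]; exact Finset.mem_image_of_mem σ hx)]
    exact List.idxOf_lt_length_iff.mpr (by rw [Finset.mem_sort]; exact Finset.mem_image_of_mem σ hx)
  have h2 : ((A.image σ).sort (· ≤ ·)).length ≤ (LLb A B σ).idxOf (σ y) := by
    rw [LLb, List.idxOf_append_of_notMem ?h]
    · exact Nat.le_add_right _ _
    · rw [Finset.mem_sort]
      intro hmem
      exact Finset.disjoint_left.mp ((Finset.disjoint_image σ.injective).mpr hd) hmem
        (Finset.mem_image_of_mem σ hy)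
  exact Fin.mk_lt_mk.mpr (lt_of_lt_of_le h1 h2)

lemma tauOrd_phi_inj (A B : Finset α) (hd : Disjoint A B) {σ₁ σ₂ : α ≃ Fin (Fintype.card α)}
    (hτ : tauOrd A B hd σ₁ = tauOrd A B hd σ₂) (hT : A.image σ₁ = A.image σ₂) : σ₁ = σ₂ := by
  have hP : (A ∪ B).image σ₁ = (A ∪ B).image σ₂ := by
    rw [← image_tauOrd A B hd σ₁, ← image_tauOrd A B hd σ₂, hτ]
  have hBim : B.image σ₁ = B.image σ₂ := by
    have key : ∀ σ : α ≃ Fin (Fintype.card α),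
        B.image σ = ((A ∪ B).image σ) \ (A.image σ) := by
      intro σ
      rw [Finset.image_union, Finset.union_sdiff_cancel_left
        ((Finset.disjoint_image σ.injective).mpr hd)]
    rw [key, key, hP, hT]
  have hL : LLb A B σ₁ = LLb A B σ₂ := by rw [LLb, LLb, hT, hBim]
  refine Equiv.ext fun x => ?_
  have hτx : tauFun A B hd σ₁ x = tauFun A B hd σ₂ x := by
    rw [← tauOrd_apply, ← tauOrd_apply, hτ]
  by_cases hx : x ∈ A ∪ B
  · rw [tauFun, dif_pos hx, tauFun, dif_pos hx] at hτx
    rw [Finset.orderEmbOfFin_apply, Finset.orderEmbOfFin_apply] at hτx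
    have hidx : (LLb A B σ₁).idxOf (σ₁ x) = (LLb A B σ₂).idxOf (σ₂ x) := by
      have hsort : ((A ∪ B).image σ₁).sort (· ≤ ·) = ((A ∪ B).image σ₂).sort (· ≤ ·) := by
        rw [hP]
      have hnd : (((A ∪ B).image σ₁).sort (· ≤ ·)).Nodup := Finset.sort_nodup _ _
      have h1 : (LLb A B σ₁).idxOf (σ₁ x) < (((A ∪ B).image σ₁).sort (· ≤ ·)).length := by
        rw [Finset.length_sort, card_image_union A B hd σ₁]
        exact indexOf_LLb_lt hx
      have h2 : (LLb A B σ₂).idxOf (σ₂ x) < (((A ∪ B).image σ₁).sort (· ≤ ·)).length := by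
        rw [hsort, Finset.length_sort, card_image_union A B hd σ₂]
        exact indexOf_LLb_lt hx
      have e2 : (((A ∪ B).image σ₂).sort (· ≤ ·))[(LLb A B σ₂).idxOf (σ₂ x)]'(hsort ▸ h2)
          = (((A ∪ B).image σ₁).sort (· ≤ ·))[(LLb A B σ₂).idxOf (σ₂ x)]'h2 := by
        simp only [hsort]
      have key : (((A ∪ B).image σ₁).sort (· ≤ ·))[(LLb A B σ₁).idxOf (σ₁ x)]'h1
          = (((A ∪ B).image σ₁).sort (· ≤ ·))[(LLb A B σ₂).idxOf (σ₂ x)]'h2 :=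
        hτx.trans e2
      exact (List.Nodup.getElem_inj_iff hnd).mp key
    rw [hL] at hidx
    have m1 : σ₁ x ∈ LLb A B σ₂ := hL ▸ mem_LLb.mpr (Finset.mem_image_of_mem σ₁ hx)
    have m2 : σ₂ x ∈ LLb A B σ₂ := mem_LLb.mpr (Finset.mem_image_of_mem σ₂ hx)
    exact (List.idxOf_inj m1).mp hidx
  · rw [tauFun_not_mem hx, tauFun_not_mem hx] at hτx
    exact hτx

end BollobasOrd

section BollobasCount

variable {α : Type*} [Fintype α] [DecidableEq α]

/-- The orderings in which every element of `A` comes before every element of `B`. -/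
def goodOrd (A B : Finset α) : Finset (α ≃ Fin (Fintype.card α)) :=
  Finset.univ.filter (fun σ => ∀ x ∈ A, ∀ y ∈ B, σ x < σ y)

lemma factorial_le_goodOrd (A B : Finset α) (hd : Disjoint A B) :
    Nat.factorial (Fintype.card α) ≤ (goodOrd A B).card * (A.card + B.card).choose A.card := by
  classical
  set T : Finset ((α ≃ Fin (Fintype.card α)) × Finset (Fin (Fintype.card α))) :=
    (goodOrd A B).biUnion
      (fun τ => {τ} ×ˢ (((A ∪ B).image τ).powersetCard A.card)) with hT
  have hmem : ∀ σ : α ≃ Fin (Fintype.card α), (tauOrd A B hd σ, A.image σ) ∈ T := by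
    intro σ
    rw [hT, Finset.mem_biUnion]
    refine ⟨tauOrd A B hd σ, ?_, ?_⟩
    · rw [goodOrd, Finset.mem_filter]
      exact ⟨Finset.mem_univ _, fun x hx y hy => tauFun_lt hd σ hx hy⟩
    · rw [Finset.mem_product]
      refine ⟨Finset.mem_singleton_self _, ?_⟩
      rw [Finset.mem_powersetCard]
      constructor
      · rw [image_tauOrd A B hd σ]
        exact Finset.image_subset_image Finset.subset_union_left
      · exact Finset.card_image_of_injective _ σ.injective
  have hinj : Function.Injective
      (fun σ : α ≃ Fin (Fintype.card α) => (tauOrd A B hd σ, A.image σ)) := by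
    intro σ₁ σ₂ h
    exact tauOrd_phi_inj A B hd (congrArg Prod.fst h) (congrArg Prod.snd h)
  have h1 : Nat.factorial (Fintype.card α) = (Finset.univ : Finset (α ≃ Fin (Fintype.card α))).card := by
    rw [Finset.card_univ, Fintype.card_equiv (Fintype.equivFin α)]
  have h2 : (Finset.univ : Finset (α ≃ Fin (Fintype.card α))).card ≤ T.card := by
    exact Finset.card_le_card_of_injOn _ (fun σ _ => hmem σ) (hinj.injOn)
  have h3 : T.card ≤ (goodOrd A B).card * (A.card + B.card).choose A.card := by
    rw [hT]
    refine le_trans (Finset.card_biUnion_le) ?_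
    have hc : ∀ τ ∈ goodOrd A B,
        ({τ} ×ˢ (((A ∪ B).image τ).powersetCard A.card)).card
          = (A.card + B.card).choose A.card := by
      intro τ _
      rw [Finset.card_product, Finset.card_singleton, one_mul, Finset.card_powersetCard,
        Finset.card_image_of_injective _ τ.injective, Finset.card_union_of_disjoint hd]
    rw [Finset.sum_congr rfl hc, Finset.sum_const, smul_eq_mul]
  omega

lemma goodOrd_disjoint {A₁ B₁ A₂ B₂ : Finset α}
    (h12 : ∃ x, x ∈ A₁ ∧ x ∈ B₂) (h21 : ∃ x, x ∈ A₂ ∧ x ∈ B₁) :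
    Disjoint (goodOrd A₁ B₁) (goodOrd A₂ B₂) := by
  rw [Finset.disjoint_left]
  intro σ h1 h2
  rw [goodOrd, Finset.mem_filter] at h1 h2
  obtain ⟨x, hx1, hx2⟩ := h12
  obtain ⟨y, hy1, hy2⟩ := h21
  exact absurd (h1.2 x hx1 y hy2) (not_lt_of_gt (h2.2 y hy1 x hx2))

lemma choose_mono_both {a' b' a b : ℕ} (ha : a' ≤ a) (hb : b' ≤ b) :
    (a' + b').choose a' ≤ (a + b).choose a := by
  have step : ∀ d n k : ℕ, n.choose k ≤ (n + d).choose (k + d) := by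
    intro d
    induction d with
    | zero => intro n k; simp
    | succ d ih =>
      intro n k
      calc n.choose k ≤ (n + d).choose (k + d) := ih n k
        _ ≤ (n + d + 1).choose (k + d + 1) := by
            rw [Nat.choose_succ_succ]; omega
  calc (a' + b').choose a' ≤ (a' + b).choose a' := Nat.choose_le_choose _ (by omega)
    _ ≤ (a' + b + (a - a')).choose (a' + (a - a')) := step _ _ _
    _ = (a + b).choose a := by congr 1 <;> omega

/-- Bollobás's set-pair inequality (symmetric version, with size bounds). -/
lemma bollobas_pairs {ι : Type*} [Fintype ι] (A B : ι → Finset α) {a b : ℕ}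
    (hA : ∀ i, (A i).card ≤ a) (hB : ∀ i, (B i).card ≤ b)
    (hd : ∀ i, Disjoint (A i) (B i))
    (hcross : ∀ i j, i ≠ j → ∃ x, x ∈ A i ∧ x ∈ B j) :
    Fintype.card ι ≤ (a + b).choose a := by
  classical
  set C := (a + b).choose a with hC
  have key : ∀ i, Nat.factorial (Fintype.card α) ≤ (goodOrd (A i) (B i)).card * C := by
    intro i
    refine le_trans (factorial_le_goodOrd (A i) (B i) (hd i)) ?_
    exact Nat.mul_le_mul_left _ (choose_mono_both (hA i) (hB i))
  have hdisj : ∀ i j : ι, i ≠ j →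
      Disjoint (goodOrd (A i) (B i)) (goodOrd (A j) (B j)) := by
    intro i j hij
    exact goodOrd_disjoint (hcross i j hij) (hcross j i hij.symm)
  have hsum : ∑ i : ι, (goodOrd (A i) (B i)).card ≤ Nat.factorial (Fintype.card α) := by
    rw [← Finset.card_biUnion (fun i _ => fun j _ hij => hdisj i j hij)]
    calc ((Finset.univ : Finset ι).biUnion (fun i => goodOrd (A i) (B i))).card
        ≤ (Finset.univ : Finset (α ≃ Fin (Fintype.card α))).card :=
          Finset.card_le_card (Finset.subset_univ _)
      _ = Nat.factorial (Fintype.card α) := by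
          rw [Finset.card_univ, Fintype.card_equiv (Fintype.equivFin α)]
  have main : Fintype.card ι * Nat.factorial (Fintype.card α) ≤ Nat.factorial (Fintype.card α) * C := by
    calc Fintype.card ι * Nat.factorial (Fintype.card α)
        = ∑ _i : ι, Nat.factorial (Fintype.card α) := by
          rw [Finset.sum_const, Finset.card_univ, smul_eq_mul]
      _ ≤ ∑ i : ι, (goodOrd (A i) (B i)).card * C := Finset.sum_le_sum (fun i _ => key i)
      _ = (∑ i : ι, (goodOrd (A i) (B i)).card) * C := by rw [Finset.sum_mul]
      _ ≤ Nat.factorial (Fintype.card α) * C := Nat.mul_le_mul_right _ hsum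
  have hpos : 0 < Nat.factorial (Fintype.card α) := Nat.factorial_pos _
  calc Fintype.card ι = Fintype.card ι * Nat.factorial (Fintype.card α) / Nat.factorial (Fintype.card α) := by
        rw [Nat.mul_div_cancel _ hpos]
    _ ≤ Nat.factorial (Fintype.card α) * C / Nat.factorial (Fintype.card α) := Nat.div_le_div_right main
    _ = C := by rw [Nat.mul_div_cancel_left _ hpos]

end BollobasCount

/-- If every cover of the hypergraph `{e i}` has at least `s` vertices, then there is a
subfamily indexed by at most `(r+s-1).choose r` indices all of whose covers have
at least `s` vertices. -/
lemma cover_witness {ι β : Type*} [Fintype ι] [Fintype β] [DecidableEq ι] [DecidableEq β]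
    (e : ι → Finset β) {r s : ℕ} (hr : ∀ i, (e i).card ≤ r)
    (hcov : ∀ S : Finset β, (∀ i, ∃ p ∈ S, p ∈ e i) → s ≤ S.card) :
    ∃ J : Finset ι, J.card ≤ (r + s - 1).choose r ∧
      ∀ S : Finset β, (∀ i ∈ J, ∃ p ∈ S, p ∈ e i) → s ≤ S.card := by
  classical
  rcases Nat.eq_zero_or_pos s with hs0 | hs1
  · exact ⟨∅, by simp, fun S _ => hs0 ▸ Nat.zero_le _⟩
  set P : Finset ι → Prop :=
    fun J => ∀ S : Finset β, (∀ i ∈ J, ∃ p ∈ S, p ∈ e i) → s ≤ S.card with hP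
  have hPuniv : P Finset.univ := fun S h => hcov S (fun i => h i (Finset.mem_univ i))
  have hne : {n | ∃ J : Finset ι, P J ∧ J.card = n}.Nonempty :=
    ⟨Finset.univ.card, Finset.univ, hPuniv, rfl⟩
  obtain ⟨J, hPJ, hJcard⟩ := Nat.sInf_mem hne
  have hmin : ∀ w ∈ J, ¬ P (J.erase w) := by
    intro w hw hP'
    have h1 : sInf {n | ∃ J : Finset ι, P J ∧ J.card = n} ≤ (J.erase w).card :=
      Nat.sInf_le ⟨J.erase w, hP', rfl⟩
    have h2 : 0 < J.card := Finset.card_pos.mpr ⟨w, hw⟩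
    rw [Finset.card_erase_of_mem hw] at h1
    omega
  have hT : ∀ w, w ∈ J → ∃ T : Finset β,
      (∀ i ∈ J.erase w, ∃ p ∈ T, p ∈ e i) ∧ T.card < s := by
    intro w hw
    by_contra hcon
    push_neg at hcon
    exact hmin w hw (fun S hS => hcon S hS)
  choose T hTcov hTcard using hT
  have hd : ∀ w : {x // x ∈ J}, Disjoint (e w.1) (T w.1 w.2) := by
    intro w
    by_contra hnd
    rw [Finset.not_disjoint_iff] at hnd
    obtain ⟨p, hpe, hpT⟩ := hnd
    refine absurd (hPJ (T w.1 w.2) ?_) (Nat.not_le.mpr (hTcard _ _))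
    intro i hi
    by_cases hiw : i = w.1
    · exact ⟨p, hpT, hiw ▸ hpe⟩
    · exact hTcov w.1 w.2 i (Finset.mem_erase.mpr ⟨hiw, hi⟩)
  have hcross : ∀ w w' : {x // x ∈ J}, w ≠ w' →
      ∃ x, x ∈ e w.1 ∧ x ∈ T w'.1 w'.2 := by
    intro w w' hne'
    have hww' : w.1 ≠ w'.1 := fun h => hne' (Subtype.ext h)
    obtain ⟨p, hpT, hpe⟩ := hTcov w'.1 w'.2 w.1 (Finset.mem_erase.mpr ⟨hww', w.2⟩)
    exact ⟨p, hpe, hpT⟩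
  have hboll := bollobas_pairs (ι := {x // x ∈ J}) (fun w => e w.1) (fun w => T w.1 w.2)
    (a := r) (b := s - 1) (fun w => hr w.1) (fun w => Nat.le_pred_of_lt (hTcard w.1 w.2))
    hd hcross
  rw [Fintype.card_coe] at hboll
  have heq : r + (s - 1) = r + s - 1 := by omega
  exact ⟨J, heq ▸ hboll, hPJ⟩

/-- If τ(H(G,c)) ≥ s, then there is a set `W` of at most `(r-1+s).choose r`
vertices of `G` with τ(H(G,W,c)) ≥ s. -/
theorem stmt_16 {V : Type*} [Fintype V] {r : ℕ} (G : SimpleGraph V)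
    (c : Sym2 V → Fin r) (s : ℕ)
    (hs : s ≤ sInf {n | ∃ S : Finset ((i : Fin r) × (colourSub G c i).ConnectedComponent),
        S.card = n ∧ ∀ u : V, ∃ p ∈ S, edMap G c u p.1 = p.2}) :
    ∃ W : Finset V, W.card ≤ (r - 1 + s).choose r ∧
      s ≤ sInf {n | ∃ S : Finset ((i : Fin r) × Option ((colourSub G c i).ConnectedComponent)),
        S.card = n ∧ ∀ u : V, ∃ p ∈ S, edMapW G c (↑W : Set V) u p.1 = p.2} := by
  classical
  by_cases hr : r = 0
  · subst hr
    have hs0 : s = 0 := by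
      by_cases hV : Nonempty V
      · have hempty : {n | ∃ S : Finset ((i : Fin 0) × (colourSub G c i).ConnectedComponent),
            S.card = n ∧ ∀ u : V, ∃ p ∈ S, edMap G c u p.1 = p.2} = ∅ := by
          ext n
          simp only [Set.mem_setOf_eq, Set.mem_empty_iff_false, iff_false, not_exists]
          rintro S ⟨hcard, hcover⟩
          obtain ⟨p, _, _⟩ := hcover (Classical.arbitrary V)
          exact p.1.elim0
        rw [hempty, Nat.sInf_empty] at hs
        omega
      · have h0 : (0:ℕ) ∈ {n | ∃ S : Finset ((i : Fin 0) × (colourSub G c i).ConnectedComponent),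
            S.card = n ∧ ∀ u : V, ∃ p ∈ S, edMap G c u p.1 = p.2} :=
          ⟨∅, Finset.card_empty, fun u => (hV ⟨u⟩).elim⟩
        have := Nat.sInf_le h0
        omega
    refine ⟨∅, by simp, ?_⟩
    rw [hs0]
    exact Nat.zero_le _
  -- now r ≥ 1
  letI : Fintype ((i : Fin r) × (colourSub G c i).ConnectedComponent) := Fintype.ofFinite _
  set β := (i : Fin r) × (colourSub G c i).ConnectedComponent with hβ
  set e : V → Finset β :=
    fun u => Finset.univ.image (fun i : Fin r => (⟨i, edMap G c u i⟩ : β)) with he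
  have ecard : ∀ u, (e u).card ≤ r := by
    intro u
    refine le_trans Finset.card_image_le ?_
    simp
  have emem : ∀ (u : V) (p : β), p ∈ e u ↔ edMap G c u p.1 = p.2 := by
    intro u p
    simp only [he, Finset.mem_image, Finset.mem_univ, true_and]
    constructor
    · rintro ⟨i, rfl⟩; rfl
    · obtain ⟨i, comp⟩ := p
      intro h
      simp only at h
      exact ⟨i, by rw [h]⟩
  have hcov : ∀ S : Finset β, (∀ u, ∃ p ∈ S, p ∈ e u) → s ≤ S.card := by
    intro S hS
    refine le_trans hs (Nat.sInf_le ?_)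
    refine ⟨S, rfl, fun u => ?_⟩
    obtain ⟨p, hpS, hpe⟩ := hS u
    exact ⟨p, hpS, (emem u p).mp hpe⟩
  obtain ⟨J, hJcard, hJ⟩ := cover_witness e ecard hcov
  refine ⟨J, ?_, ?_⟩
  · have heq : r - 1 + s = r + s - 1 := by omega
    rw [heq]
    exact hJcard
  · letI : Fintype ((i : Fin r) × Option ((colourSub G c i).ConnectedComponent)) :=
      Fintype.ofFinite _
    apply le_csInf
    · refine ⟨(Finset.univ :
        Finset ((i : Fin r) × Option ((colourSub G c i).ConnectedComponent))).card,
        Finset.univ, rfl, fun u => ?_⟩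
      exact ⟨⟨⟨0, Nat.pos_of_ne_zero hr⟩, edMapW G c (↑J : Set V) u ⟨0, Nat.pos_of_ne_zero hr⟩⟩,
        Finset.mem_univ _, rfl⟩
    · rintro n ⟨S, rfl, hcover⟩
      set f : ((i : Fin r) × Option ((colourSub G c i).ConnectedComponent)) → Finset β :=
        fun p => if h : p.2.isSome then {⟨p.1, Option.get p.2 h⟩} else ∅ with hf
      have hcard' : (S.biUnion f).card ≤ S.card := by
        refine le_trans Finset.card_biUnion_le ?_
        refine le_trans (Finset.sum_le_sum (fun p _ => ?_))
          (le_of_eq (by rw [Finset.sum_const, smul_eq_mul, mul_one]))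
        by_cases h : p.2.isSome <;> simp [hf, h]
      refine le_trans (hJ (S.biUnion f) ?_) hcard'
      intro w hw
      obtain ⟨p, hpS, hp⟩ := hcover w
      have hW : edMapW G c (↑J : Set V) w p.1 = some (edMap G c w p.1) := by
        simp only [edMapW]
        rw [if_pos ⟨w, Finset.mem_coe.mpr hw, rfl⟩]
        rfl
      have hp2 : p.2 = some (edMap G c w p.1) := by rw [← hp, hW]
      refine ⟨⟨p.1, edMap G c w p.1⟩, ?_, (emem w _).mpr rfl⟩
      refine Finset.mem_biUnion.mpr ⟨p, hpS, ?_⟩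
      have hsome : p.2.isSome := by rw [hp2]; rfl
      simp only [hf, dif_pos hsome]
      rw [Finset.mem_singleton]
      obtain ⟨i, o⟩ := p
      simp only at hp2 ⊢
      subst hp2
      rfl
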